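/- Let K be a set of q^2+2q+1 points in PG(4,q), q ≥ 5, such that every 3-space meets K in one of the eight allowed types. Then there is no 3-space meeting K in exactly one point. -/

import Mathlib

open Projectivization

variable (F : Type) [Field F] [Fintype F]

/-- The points of the projective space `PG(n,q)` over a field `F` (of order `q`). -/
abbrev PGPt (n : ℕ) := Projectivization F (Fin (n + 1) → F)

/-- `S` is a projective subspace of (projective) dimension `d` of `PG(n,q)`. -/
def IsSubsp (n d : ℕ) (S : Set (PGPt F n)) : Prop :=
  ∃ W : Submodule F (Fin (n + 1) → F), Module.finrank F W = d + 1 ∧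
    S = {p | p.submodule ≤ W}

/-- A line of `PG(n,q)`. -/
abbrev IsLine (n : ℕ) (S : Set (PGPt F n)) : Prop := IsSubsp F n 1 S

/-- A plane of `PG(n,q)`. -/
abbrev IsPlane (n : ℕ) (S : Set (PGPt F n)) : Prop := IsSubsp F n 2 S

/-- A 3-space (hyperplane) of `PG(4,q)`. -/
abbrev IsSolid (S : Set (PGPt F 4)) : Prop := IsSubsp F 4 3 S

/-- A non-degenerate conic of `PG(n,q)` : the image of the standard conic
`{[a² : ab : b²]}` of `PG(2,q)` under an injective linear map. -/
def IsConic (n : ℕ) (C : Set (PGPt F n)) : Prop :=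
  ∃ f : (Fin 3 → F) →ₗ[F] (Fin (n + 1) → F), Function.Injective f ∧
    C = {p | ∃ a b : F, (a ≠ 0 ∨ b ≠ 0) ∧
      p.submodule = Submodule.span F {f ![a ^ 2, a * b, b ^ 2]}}

/-- A twisted cubic of `PG(n,q)` : the image of the standard twisted cubic
`{[a³ : a²b : ab² : b³]}` of `PG(3,q)` under an injective linear map. -/
def IsTwistedCubic (n : ℕ) (C : Set (PGPt F n)) : Prop :=
  ∃ f : (Fin 4 → F) →ₗ[F] (Fin (n + 1) → F), Function.Injective f ∧
    C = {p | ∃ a b : F, (a ≠ 0 ∨ b ≠ 0) ∧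
      p.submodule = Submodule.span F {f ![a ^ 3, a ^ 2 * b, a * b ^ 2, b ^ 3]}}

/-- A ruled cubic surface of `PG(4,q)` : the image, under a projective transformation,
of the standard scroll ruling the line `{[a : b : 0 : 0 : 0]}` and the conic
`{[0 : 0 : a² : ab : b²]}` according to a projectivity (normalized to the identity). -/
def IsRuledCubicSurface (K : Set (PGPt F 4)) : Prop :=
  ∃ g : (Fin 5 → F) ≃ₗ[F] (Fin 5 → F),
    K = {p | ∃ a b s t : F, (a ≠ 0 ∨ b ≠ 0) ∧ (s ≠ 0 ∨ t ≠ 0) ∧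
      p.submodule = Submodule.span F {g ![s * a, s * b, t * a ^ 2, t * (a * b), t * b ^ 2]}}

/-- The intersection of the 3-space `Pi` with `K` is one line. -/
def TypeOneLine (K Pi : Set (PGPt F 4)) : Prop :=
  ∃ ℓ, IsLine F 4 ℓ ∧ K ∩ Pi = ℓ

/-- The intersection of the 3-space `Pi` with `K` is two (distinct) lines. -/
def TypeTwoLines (K Pi : Set (PGPt F 4)) : Prop :=
  ∃ ℓ m, IsLine F 4 ℓ ∧ IsLine F 4 m ∧ ℓ ≠ m ∧ K ∩ Pi = ℓ ∪ m

/-- The intersection of the 3-space `Pi` with `K` is three (distinct) lines. -/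
def TypeThreeLines (K Pi : Set (PGPt F 4)) : Prop :=
  ∃ ℓ m n, IsLine F 4 ℓ ∧ IsLine F 4 m ∧ IsLine F 4 n ∧
    ℓ ≠ m ∧ ℓ ≠ n ∧ m ≠ n ∧ K ∩ Pi = ℓ ∪ m ∪ n

/-- The intersection of the 3-space `Pi` with `K` is a line and a non-degenerate conic. -/
def TypeLineConic (K Pi : Set (PGPt F 4)) : Prop :=
  ∃ ℓ C, IsLine F 4 ℓ ∧ IsConic F 4 C ∧ K ∩ Pi = ℓ ∪ C

/-- The intersection of the 3-space `Pi` with `K` is a twisted cubic. -/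
def TypeTwistedCubic (K Pi : Set (PGPt F 4)) : Prop :=
  ∃ C, IsTwistedCubic F 4 C ∧ K ∩ Pi = C

/-- The intersection of the 3-space `Pi` with `K` is a single point. -/
def TypePoint (K Pi : Set (PGPt F 4)) : Prop :=
  ∃ P, K ∩ Pi = {P}

/-- The intersection of the 3-space `Pi` with `K` is a non-degenerate conic and two lines. -/
def TypeConicTwoLines (K Pi : Set (PGPt F 4)) : Prop :=
  ∃ C ℓ m, IsConic F 4 C ∧ IsLine F 4 ℓ ∧ IsLine F 4 m ∧ ℓ ≠ m ∧ K ∩ Pi = C ∪ ℓ ∪ m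

/-- The intersection of the 3-space `Pi` with `K` is a line and a twisted cubic. -/
def TypeLineTwistedCubic (K Pi : Set (PGPt F 4)) : Prop :=
  ∃ ℓ C, IsLine F 4 ℓ ∧ IsTwistedCubic F 4 C ∧ K ∩ Pi = ℓ ∪ C

/-- Every 3-space meets `K` in one, two or three lines, a line and a
non-degenerate conic, or a twisted cubic. -/
def FiveTypeHyp (K : Set (PGPt F 4)) : Prop :=
  ∀ Pi, IsSolid F Pi →
    TypeOneLine F K Pi ∨ TypeTwoLines F K Pi ∨ TypeThreeLines F K Pi ∨
      TypeLineConic F K Pi ∨ TypeTwistedCubic F K Pi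

/-- Every 3-space meets `K` in one of the eight allowed types. -/
def EightTypeHyp (K : Set (PGPt F 4)) : Prop :=
  ∀ Pi, IsSolid F Pi →
    TypeOneLine F K Pi ∨ TypeTwoLines F K Pi ∨ TypeThreeLines F K Pi ∨
      TypeLineConic F K Pi ∨ TypeTwistedCubic F K Pi ∨
      TypePoint F K Pi ∨ TypeConicTwoLines F K Pi ∨ TypeLineTwistedCubic F K Pi

/-- `m` lists the `q+1` sticks of `K` (pairwise skew lines partitioning `K`) and `b` is
the baseline: a further line of `K` meeting every stick. -/
def SticksAndBase (q : ℕ) (K : Set (PGPt F 4)) (m : Fin (q + 1) → Set (PGPt F 4))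
    (b : Set (PGPt F 4)) : Prop :=
  (∀ i, IsLine F 4 (m i)) ∧ (∀ i j, i ≠ j → Disjoint (m i) (m j)) ∧ (⋃ i, m i) = K ∧
    IsLine F 4 b ∧ b ⊆ K ∧ (∀ i, b ≠ m i) ∧ (∀ i, (b ∩ m i).Nonempty)

lemma aux_ncard_iUnion_le {α ι : Type*} [Fintype ι] (s : ι → Set α) :
    (⋃ i, s i).ncard ≤ ∑ i : ι, (s i).ncard := by
  classical
  have H : ∀ t : Finset ι, (⋃ i ∈ t, s i).ncard ≤ ∑ i ∈ t, (s i).ncard := by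
    intro t
    induction t using Finset.induction_on with
    | empty => simp
    | insert _ _ ha ih =>
      rw [Finset.set_biUnion_insert, Finset.sum_insert ha]
      exact (Set.ncard_union_le _ _).trans (Nat.add_le_add_left ih _)
  have h2 : (⋃ i, s i) = ⋃ i ∈ (Finset.univ : Finset ι), s i := by simp
  rw [h2]
  exact H Finset.univ

lemma aux_cubic_ncard_le (F : Type) [Field F] [Fintype F] (C : Set (PGPt F 4))
    (h : IsTwistedCubic F 4 C) : C.ncard ≤ Fintype.card F + 1 := by
  classical
  obtain ⟨f, hf, hC⟩ := h
  set vec : Option F → (Fin 4 → F) :=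
    fun r => r.elim ![0, 0, 0, 1] (fun r => ![1, r, r ^ 2, r ^ 3]) with hvec
  have hfvec : ∀ r : Option F, f (vec r) ≠ 0 := by
    rintro (_ | r) h0
    · have : vec none = 0 := by
        have := hf (a₁ := vec none) (a₂ := 0) (by simpa using h0)
        simpa using this
      exact one_ne_zero (congr_fun this 3)
    · have : vec (some r) = 0 := by
        have := hf (a₁ := vec (some r)) (a₂ := 0) (by simpa using h0)
        simpa using this
      exact one_ne_zero (congr_fun this 0)
  have hsub : C ⊆ Set.range (fun r : Option F => Projectivization.mk F (f (vec r)) (hfvec r)) := by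
    intro p hp
    rw [hC] at hp
    obtain ⟨a, b, hab, hspan⟩ := hp
    by_cases ha : a = 0
    · have hb : b ≠ 0 := hab.resolve_left (fun h2 => h2 ha)
      refine ⟨none, ?_⟩
      apply Projectivization.submodule_injective
      rw [Projectivization.submodule_mk, hspan]
      have hv : ![a ^ 3, a ^ 2 * b, a * b ^ 2, b ^ 3] = b ^ 3 • vec none := by
        subst ha; funext j; fin_cases j <;> simp [hvec]
      rw [hv, map_smul, Submodule.span_singleton_smul_eq
        (isUnit_iff_ne_zero.2 (pow_ne_zero 3 hb)) _]
    · refine ⟨some (b / a), ?_⟩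
      apply Projectivization.submodule_injective
      rw [Projectivization.submodule_mk, hspan]
      have hv : ![a ^ 3, a ^ 2 * b, a * b ^ 2, b ^ 3] = a ^ 3 • vec (some (b / a)) := by
        funext j; fin_cases j <;> (try simp [hvec]) <;> (try field_simp) <;> ring_nf
      rw [hv, map_smul, Submodule.span_singleton_smul_eq
        (isUnit_iff_ne_zero.2 (pow_ne_zero 3 ha)) _]
  calc C.ncard ≤ (Set.range (fun r : Option F =>
        Projectivization.mk F (f (vec r)) (hfvec r))).ncard :=
        Set.ncard_le_ncard hsub (Set.finite_range _)
    _ = Nat.card (Set.range (fun r : Option F =>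
        Projectivization.mk F (f (vec r)) (hfvec r))) := (Nat.card_coe_set_eq _).symm
    _ ≤ Nat.card (Option F) := Finite.card_range_le _
    _ = Fintype.card F + 1 := by rw [Nat.card_eq_fintype_card, Fintype.card_option]

/-- there is no 3-space meeting `K` in exactly one point. -/
theorem stmt11 (q : ℕ) (hq : Fintype.card F = q) (h5 : 5 ≤ q) (K : Set (PGPt F 4))
    (hK : K.ncard = q ^ 2 + 2 * q + 1) (hyp : EightTypeHyp F K) :
    ∀ Pi, IsSolid F Pi → ¬TypePoint F K Pi := by
  classical
  rintro Pi ⟨WP, hWP4, hPeq⟩ ⟨P, hKP⟩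
  have hPmem : P ∈ K ∩ Pi := by rw [hKP]; exact rfl
  have hv0 : P.rep ≠ 0 := P.rep_nonzero
  have hvsub : P.rep ∈ P.submodule := by
    rw [Projectivization.submodule_eq]
    exact Submodule.mem_span_singleton_self _
  have hvP : P.rep ∈ WP := by
    have h1 : P.submodule ≤ WP := by
      have := hPmem.2
      rw [hPeq] at this
      exact this
    exact h1 hvsub
  obtain ⟨i, hi⟩ : ∃ i, P.rep i ≠ 0 := by
    by_contra hcon
    push_neg at hcon
    exact hv0 (funext hcon)
  set χ₃ : (Fin (4 + 1) → F) →ₗ[F] F := LinearMap.proj i with hχ₃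
  have hχ₃v : χ₃ P.rep ≠ 0 := hi
  have hdim5 : Module.finrank F (Fin (4 + 1) → F) = 5 := by
    simp [Module.finrank_pi]
  have hquot : Module.finrank F ((Fin (4 + 1) → F) ⧸ WP) = 1 := by
    have := Submodule.finrank_quotient_add_finrank WP
    rw [hWP4, hdim5] at this
    omega
  obtain ⟨e⟩ : Nonempty (((Fin (4 + 1) → F) ⧸ WP) ≃ₗ[F] F) :=
    FiniteDimensional.nonempty_linearEquiv_of_finrank_eq
      (by rw [hquot, Module.finrank_self])
  set χ₄ : (Fin (4 + 1) → F) →ₗ[F] F := e.toLinearMap ∘ₗ WP.mkQ with hχ₄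
  have hker4 : LinearMap.ker χ₄ = WP := by
    rw [hχ₄, LinearMap.ker_comp, LinearEquiv.ker, Submodule.comap_bot, Submodule.ker_mkQ]
  have hχ₄v : χ₄ P.rep = 0 := by
    rw [← LinearMap.mem_ker, hker4]; exact hvP
  have hkerrank : ∀ (φ : (Fin (4 + 1) → F) →ₗ[F] F) (x : Fin (4 + 1) → F), φ x ≠ 0 →
      Module.finrank F (LinearMap.ker φ) = 4 := by
    intro φ x hx
    have hsurj : LinearMap.range φ = ⊤ := by
      rw [LinearMap.range_eq_top]
      intro c
      exact ⟨(c / φ x) • x, by rw [map_smul, smul_eq_mul, div_mul_cancel₀ _ hx]⟩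
    have h := LinearMap.finrank_range_add_finrank_ker φ
    rw [hsurj, finrank_top, hdim5, Module.finrank_self] at h
    omega
  set T : Option F → Submodule F (Fin (4 + 1) → F) :=
    fun o => o.elim (LinearMap.ker χ₃) (fun t => LinearMap.ker (χ₄ - t • χ₃)) with hT
  have hTnone : T none = LinearMap.ker χ₃ := rfl
  have hTsome : ∀ t, T (some t) = LinearMap.ker (χ₄ - t • χ₃) := fun t => rfl
  have hTrank : ∀ o, Module.finrank F (T o) = 4 := by
    rintro (_ | t)
    · rw [hTnone]; exact hkerrank χ₃ P.rep hχ₃v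
    · rw [hTsome]
      rcases eq_or_ne t 0 with rfl | ht
      · have hne : WP ≠ ⊤ := by
          intro htop
          rw [htop, finrank_top, hdim5] at hWP4
          omega
        obtain ⟨w, hw⟩ : ∃ w, w ∉ WP := by
          by_contra hcon
          push_neg at hcon
          exact hne (Submodule.eq_top_iff'.2 hcon)
        refine hkerrank _ w ?_
        simp only [zero_smul, sub_zero]
        intro h0
        exact hw (by rw [← hker4]; exact h0)
      · refine hkerrank _ P.rep ?_
        simp only [LinearMap.sub_apply, LinearMap.smul_apply, smul_eq_mul, hχ₄v, zero_sub,
          neg_ne_zero]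
        exact mul_ne_zero ht hχ₃v
  set Sol : Option F → Set (PGPt F 4) := fun o => {p | p.submodule ≤ T o} with hSolDef
  have hSolid : ∀ o, IsSolid F (Sol o) := fun o => ⟨T o, by rw [hTrank], rfl⟩
  have hSol0 : Sol (some 0) = Pi := by
    have hT0 : T (some 0) = WP := by
      rw [hTsome]
      have : χ₄ - (0 : F) • χ₃ = χ₄ := by simp
      rw [this, hker4]
    rw [hPeq, hSolDef]
    simp only [hT0]
  have hcover : ∀ p : PGPt F 4, ∃ o, p ∈ Sol o := by
    intro p
    rcases eq_or_ne (χ₃ p.rep) 0 with h3 | h3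
    · refine ⟨none, ?_⟩
      show p.submodule ≤ T none
      rw [hTnone, Projectivization.submodule_eq, Submodule.span_singleton_le_iff_mem]
      exact h3
    · refine ⟨some (χ₄ p.rep / χ₃ p.rep), ?_⟩
      show p.submodule ≤ T (some _)
      rw [hTsome, Projectivization.submodule_eq, Submodule.span_singleton_le_iff_mem,
        LinearMap.mem_ker, LinearMap.sub_apply, LinearMap.smul_apply, smul_eq_mul,
        div_mul_cancel₀ _ h3, sub_self]
  set W' : Submodule F (Fin (4 + 1) → F) := LinearMap.ker χ₃ ⊓ WP with hW'Def
  have hW'rank : 3 ≤ Module.finrank F W' := by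
    have h := Submodule.finrank_sup_add_finrank_inf_eq (LinearMap.ker χ₃) WP
    have h1 : Module.finrank F ↥(LinearMap.ker χ₃ ⊔ WP) ≤ 5 :=
      (Submodule.finrank_le _).trans_eq hdim5
    rw [hkerrank χ₃ P.rep hχ₃v, hWP4] at h
    rw [hW'Def]
    omega
  have hW'le : ∀ o, W' ≤ T o := by
    rintro (_ | t) w hw
    · exact hw.1
    · rw [hTsome]
      have h4 : χ₄ w = 0 := by rw [← LinearMap.mem_ker, hker4]; exact hw.2
      have h3 : χ₃ w = 0 := hw.1
      simp [LinearMap.sub_apply, h4, h3]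
  have hline : ∀ (o : Option F) (ℓ : Set (PGPt F 4)),
      IsLine F 4 ℓ → ℓ ⊆ K → ℓ ⊆ Sol o → False := by
    rintro o ℓ ⟨Wℓ, hWℓ2, hℓeq⟩ hℓK hℓSol
    have hWℓle : Wℓ ≤ T o := by
      intro w hw
      rcases eq_or_ne w 0 with rfl | hw0
      · exact (T o).zero_mem
      · have hmem : Projectivization.mk F w hw0 ∈ ℓ := by
          rw [hℓeq]
          show (Projectivization.mk F w hw0).submodule ≤ Wℓ
          rw [Projectivization.submodule_mk, Submodule.span_singleton_le_iff_mem]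
          exact hw
        have h2 : (Projectivization.mk F w hw0).submodule ≤ T o := hℓSol hmem
        rw [Projectivization.submodule_mk, Submodule.span_singleton_le_iff_mem] at h2
        exact h2
    have hsup : Module.finrank F ↥(Wℓ ⊔ W') ≤ 4 := by
      have hle : Wℓ ⊔ W' ≤ T o := sup_le hWℓle (hW'le o)
      exact (Submodule.finrank_mono hle).trans_eq (hTrank o)
    have hinf := Submodule.finrank_sup_add_finrank_inf_eq Wℓ W'
    rw [hWℓ2] at hinf
    have hpos : 1 ≤ Module.finrank F ↥(Wℓ ⊓ W') := by omega
    obtain ⟨w, hwmem, hw0⟩ : ∃ w ∈ Wℓ ⊓ W', w ≠ (0 : Fin (4 + 1) → F) := by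
      rw [← Submodule.ne_bot_iff]
      intro hbot
      rw [hbot, finrank_bot] at hpos
      omega
    have hpsub : (Projectivization.mk F w hw0).submodule = Submodule.span F {w} :=
      Projectivization.submodule_mk w hw0
    have hpℓ : Projectivization.mk F w hw0 ∈ ℓ := by
      rw [hℓeq]
      show (Projectivization.mk F w hw0).submodule ≤ Wℓ
      rw [hpsub, Submodule.span_singleton_le_iff_mem]
      exact hwmem.1
    have hpPi : Projectivization.mk F w hw0 ∈ Pi := by
      rw [hPeq]
      show (Projectivization.mk F w hw0).submodule ≤ WP
      rw [hpsub, Submodule.span_singleton_le_iff_mem]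
      exact hwmem.2.2
    have hpP : Projectivization.mk F w hw0 = P := by
      have hmem2 : Projectivization.mk F w hw0 ∈ K ∩ Pi := ⟨hℓK hpℓ, hpPi⟩
      rw [hKP] at hmem2
      exact hmem2
    have hvspan : P.rep ∈ Submodule.span F {w} := by
      rw [← hpsub, hpP]
      exact hvsub
    obtain ⟨c, hc⟩ := Submodule.mem_span_singleton.1 hvspan
    apply hχ₃v
    have h30 : χ₃ w = 0 := hwmem.2.1
    rw [← hc, map_smul, smul_eq_mul, h30, mul_zero]
  have hbound : ∀ o, (K ∩ Sol o).ncard ≤ q + 1 := by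
    intro o
    have hlsub : ∀ ℓ : Set (PGPt F 4), IsLine F 4 ℓ → ℓ ⊆ K ∩ Sol o → False := by
      intro ℓ hℓ hsub
      exact hline o ℓ hℓ (fun x hx => (hsub hx).1) (fun x hx => (hsub hx).2)
    rcases hyp (Sol o) (hSolid o) with h | h | h | h | h | h | h | h
    · obtain ⟨ℓ, hℓ, heq⟩ := h
      exact (hlsub ℓ hℓ (by rw [heq])).elim
    · obtain ⟨ℓ, m, hℓ, hm, hne, heq⟩ := h
      exact (hlsub ℓ hℓ (by rw [heq]; exact Set.subset_union_left)).elim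
    · obtain ⟨ℓ, m, n, hℓ, hm, hn, h1, h2, h3, heq⟩ := h
      exact (hlsub ℓ hℓ (by rw [heq]; exact Set.subset_union_left.trans Set.subset_union_left)).elim
    · obtain ⟨ℓ, C, hℓ, hC, heq⟩ := h
      exact (hlsub ℓ hℓ (by rw [heq]; exact Set.subset_union_left)).elim
    · obtain ⟨C, hC, heq⟩ := h
      rw [heq]
      have := aux_cubic_ncard_le F C hC
      rw [hq] at this
      exact this
    · obtain ⟨P', heq⟩ := h
      rw [heq, Set.ncard_singleton]
      omega
    · obtain ⟨C, ℓ, m, hC, hℓ, hm, hne, heq⟩ := h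
      exact (hlsub ℓ hℓ (by rw [heq]; exact Set.subset_union_right.trans Set.subset_union_left)).elim
    · obtain ⟨ℓ, C, hℓ, hC, heq⟩ := h
      exact (hlsub ℓ hℓ (by rw [heq]; exact Set.subset_union_left)).elim
  have hone : (K ∩ Sol (some 0)).ncard = 1 := by
    rw [hSol0, hKP]
    exact Set.ncard_singleton P
  have hcoverK : K = ⋃ o, (K ∩ Sol o) := by
    ext p
    constructor
    · intro hp
      obtain ⟨o, ho⟩ := hcover p
      exact Set.mem_iUnion.2 ⟨o, hp, ho⟩
    · intro hp
      obtain ⟨o, hpo⟩ := Set.mem_iUnion.1 hp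
      exact hpo.1
  have hsum : K.ncard ≤ ∑ o : Option F, (K ∩ Sol o).ncard := by
    conv_lhs => rw [hcoverK]
    exact aux_ncard_iUnion_le _
  have hsum2 : ∑ o : Option F, (K ∩ Sol o).ncard ≤ 1 + q * (q + 1) := by
    have hmem : (some 0 : Option F) ∈ (Finset.univ : Finset (Option F)) := Finset.mem_univ _
    rw [← Finset.add_sum_erase _ _ hmem, hone]
    have hcarde : (Finset.univ.erase (some (0 : F))).card = q := by
      rw [Finset.card_erase_of_mem hmem, Finset.card_univ, Fintype.card_option, hq]
      omega
    have hle2 : ∑ o ∈ Finset.univ.erase (some (0 : F)), (K ∩ Sol o).ncard ≤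
        (Finset.univ.erase (some (0 : F))).card * (q + 1) := by
      calc ∑ o ∈ Finset.univ.erase (some (0 : F)), (K ∩ Sol o).ncard
          ≤ ∑ _o ∈ Finset.univ.erase (some (0 : F)), (q + 1) :=
            Finset.sum_le_sum (fun o _ => hbound o)
        _ = (Finset.univ.erase (some (0 : F))).card * (q + 1) := by
            rw [Finset.sum_const, smul_eq_mul]
    rw [hcarde] at hle2
    omega
  rw [hK] at hsum
  have hfinal := hsum.trans hsum2
  nlinarith
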